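/- In the Biggs-Smith graph, every path along the a-cycle of length at most 7 is a shortest path between its endpoints. -/
import Mathlib


/-- Vertex set of the Biggs-Smith graph: `(i, x)` with `i ∈ ℤ/17` and
`x ∈ {a,b,c,d,e,f}` encoded as `Fin 6` (`0=a, 1=b, 2=c, 3=d, 4=e, 5=f`). -/
abbrev BSV : Type := ZMod 17 × Fin 6

/-- Base (one-directional) edge relation of the Biggs-Smith graph. -/
def bsRel (p q : BSV) : Prop :=
  (p.1 = q.1 ∧ ((p.2 = 4 ∧ q.2 = 0) ∨ (p.2 = 4 ∧ q.2 = 1) ∨ (p.2 = 5 ∧ q.2 = 2) ∨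
    (p.2 = 5 ∧ q.2 = 3) ∨ (p.2 = 4 ∧ q.2 = 5))) ∨
  (p.2 = 0 ∧ q.2 = 0 ∧ q.1 = p.1 + 1) ∨
  (p.2 = 1 ∧ q.2 = 1 ∧ q.1 = p.1 + 4) ∨
  (p.2 = 2 ∧ q.2 = 2 ∧ q.1 = p.1 + 2) ∨
  (p.2 = 3 ∧ q.2 = 3 ∧ q.1 = p.1 + 8)

/-- The Biggs-Smith graph. -/
def biggsSmith : SimpleGraph BSV := SimpleGraph.fromRel bsRel

instance : DecidableRel bsRel := fun p q => by unfold bsRel; infer_instance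

instance : DecidableRel biggsSmith.Adj := fun v w =>
  decidable_of_iff (v ≠ w ∧ (bsRel v w ∨ bsRel w v)) (by
    rw [biggsSmith, SimpleGraph.fromRel_adj])

/-- BFS distance table from `(0,0)` in the Biggs-Smith graph, row indexed by letter. -/
def bsTable : Fin 6 → List ℕ :=
  ![[0, 1, 2, 3, 4, 5, 6, 7, 6, 6, 7, 6, 5, 4, 3, 2, 1],
    [2, 3, 4, 4, 3, 4, 5, 5, 4, 4, 5, 5, 4, 3, 4, 4, 3],
    [3, 4, 4, 5, 5, 6, 6, 7, 6, 6, 7, 6, 6, 5, 5, 4, 4],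
    [3, 4, 5, 6, 6, 7, 6, 5, 4, 4, 5, 6, 7, 6, 6, 5, 4],
    [1, 2, 3, 4, 4, 5, 6, 6, 5, 5, 6, 6, 5, 4, 4, 3, 2],
    [2, 3, 4, 5, 5, 6, 7, 6, 5, 5, 6, 7, 6, 5, 5, 4, 3]]

/-- The distance-from-`(0,0)` labeling. -/
def bsF (v : BSV) : ℕ := (bsTable v.2).getD v.1.val 0

set_option maxRecDepth 10000 in
lemma bsF_lip_rel : ∀ u v : BSV, bsRel u v → bsF v ≤ bsF u + 1 ∧ bsF u ≤ bsF v + 1 := by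
  decide

lemma bsF_lip {u v : BSV} (h : biggsSmith.Adj u v) : bsF v ≤ bsF u + 1 := by
  rw [biggsSmith, SimpleGraph.fromRel_adj] at h
  rcases h.2 with h' | h'
  · exact (bsF_lip_rel u v h').1
  · exact (bsF_lip_rel v u h').2

lemma bsRel_shift (c : ZMod 17) {p q : BSV} (h : bsRel p q) :
    bsRel (p.1 + c, p.2) (q.1 + c, q.2) := by
  unfold bsRel at h ⊢
  rcases h with ⟨h1, h2⟩ | ⟨h1, h2, h3⟩ | ⟨h1, h2, h3⟩ | ⟨h1, h2, h3⟩ | ⟨h1, h2, h3⟩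
  · exact Or.inl ⟨by rw [h1], h2⟩
  · exact Or.inr <| Or.inl ⟨h1, h2, by rw [h3]; ring⟩
  · exact Or.inr <| Or.inr <| Or.inl ⟨h1, h2, by rw [h3]; ring⟩
  · exact Or.inr <| Or.inr <| Or.inr <| Or.inl ⟨h1, h2, by rw [h3]; ring⟩
  · exact Or.inr <| Or.inr <| Or.inr <| Or.inr ⟨h1, h2, by rw [h3]; ring⟩

lemma adj_shift (c : ZMod 17) {p q : BSV} (h : biggsSmith.Adj p q) :
    biggsSmith.Adj (p.1 + c, p.2) (q.1 + c, q.2) := by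
  rw [biggsSmith, SimpleGraph.fromRel_adj] at h ⊢
  refine ⟨fun hc => h.1 ?_, ?_⟩
  · have h1 : p.1 = q.1 := by
      have := congrArg Prod.fst hc
      simpa using this
    have h2 : p.2 = q.2 := by
      have := congrArg Prod.snd hc
      simpa using this
    exact Prod.ext h1 h2
  · rcases h.2 with h' | h'
    · exact Or.inl (bsRel_shift c h')
    · exact Or.inr (bsRel_shift c h')

/-- Along any walk, the translated distance labeling grows by at most one per step. -/
lemma bsF_walk_bound (i : ZMod 17) :
    ∀ {u v : BSV} (w : biggsSmith.Walk u v),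
      bsF (v.1 - i, v.2) ≤ bsF (u.1 - i, u.2) + w.length := by
  intro u v w
  induction w with
  | nil => simp
  | @cons a b c h p ih =>
    have hab : bsF (b.1 - i, b.2) ≤ bsF (a.1 - i, a.2) + 1 := by
      have := adj_shift (-i) h
      simpa [sub_eq_add_neg] using bsF_lip this
    simp only [SimpleGraph.Walk.length_cons]
    omega

lemma adj_a_step (j : ZMod 17) : biggsSmith.Adj (j, 0) (j + 1, 0) := by
  rw [biggsSmith, SimpleGraph.fromRel_adj]
  constructor
  · intro hc
    have h1 : j + 0 = j + 1 := by
      have := congrArg Prod.fst hc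
      simpa using this
    have h2 : (0 : ZMod 17) = 1 := add_left_cancel h1
    exact absurd h2 (by decide)
  · exact Or.inl (Or.inr <| Or.inl ⟨rfl, rfl, rfl⟩)

lemma exists_a_walk (j : ZMod 17) (k : ℕ) :
    ∃ w : biggsSmith.Walk (j, 0) (j + (k : ZMod 17), 0), w.length = k := by
  induction k with
  | zero =>
    rw [Nat.cast_zero, add_zero]
    exact ⟨SimpleGraph.Walk.nil, rfl⟩
  | succ n ih =>
    obtain ⟨w, hw⟩ := ih
    rw [show ((n + 1 : ℕ) : ZMod 17) = (n : ZMod 17) + 1 by push_cast; ring, ← add_assoc]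
    exact ⟨w.concat (adj_a_step _), by simp [SimpleGraph.Walk.length_concat, hw]⟩

/-- Every path along the `a`-cycle of the Biggs-Smith graph of length at most 7 is a
shortest path between its endpoints: the distance from `(i,a)` to `(i+k,a)` is `k`
whenever `k ≤ 7`. -/
theorem a_cycle_geodesic :
    ∀ (i : ZMod 17) (k : ℕ), k ≤ 7 →
      biggsSmith.dist (i, 0) (i + (k : ZMod 17), 0) = k := by
  intro i k hk
  obtain ⟨w, hw⟩ := exists_a_walk i k
  have hub : biggsSmith.dist (i, 0) (i + (k : ZMod 17), 0) ≤ k := by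
    have := SimpleGraph.dist_le w
    rwa [hw] at this
  have hreach : biggsSmith.Reachable (i, 0) (i + (k : ZMod 17), 0) := ⟨w⟩
  obtain ⟨p, hp⟩ := hreach.exists_walk_length_eq_dist
  have hlb := bsF_walk_bound i p
  simp only [sub_self] at hlb
  have hcancel : i + (k : ZMod 17) - i = (k : ZMod 17) := by ring
  rw [hcancel, hp] at hlb
  have hfk : bsF ((k : ZMod 17), 0) = k := by
    interval_cases k <;> rfl
  rw [hfk] at hlb
  have h0 : bsF (0, 0) = 0 := rfl
  rw [h0] at hlb
  omega
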